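/- The ranking induced by the generalized row sum converges to the ranking from the normalized scores as ε → 0: if s_i > s_j for two teams i and j, then there exists ε₀ > 0 such that x_i(ε) > x_j(ε) for all 0 < ε < ε₀. -/

import Mathlib

open Matrix Finset

/-- The Laplacian matrix of the matches matrix `M`:
`L i j = -M i j` for `i ≠ j` and `L i i = ∑_{j ≠ i} M i j`. -/
def lap {n : ℕ} (M : Matrix (Fin n) (Fin n) ℝ) : Matrix (Fin n) (Fin n) ℝ :=
  Matrix.of fun i j => if i = j then ∑ k ∈ Finset.univ.erase i, M i k else -M i j

/-- Componentwise formula for `lap M *ᵥ v`. -/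
lemma lap_mulVec {n : ℕ} (M : Matrix (Fin n) (Fin n) ℝ) (v : Fin n → ℝ) (i : Fin n) :
    (lap M *ᵥ v) i = ∑ k, M i k * (v i - v k) := by
  have hmem : i ∈ (Finset.univ : Finset (Fin n)) := mem_univ i
  rw [Matrix.mulVec, dotProduct]
  rw [← Finset.add_sum_erase _ _ hmem, ← Finset.add_sum_erase _ (fun k => M i k * (v i - v k)) hmem]
  have h1 : lap M i i = ∑ k ∈ Finset.univ.erase i, M i k := by simp [lap]
  have h2 : ∀ k ∈ Finset.univ.erase i, lap M i k * v k = -(M i k * v k) := by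
    intro k hk
    have : i ≠ k := fun h => (Finset.mem_erase.mp hk).1 h.symm
    simp [lap, this]
  rw [Finset.sum_congr rfl h2, h1]
  have h3 : ∀ k ∈ Finset.univ.erase i, M i k * (v i - v k) = M i k * v i - M i k * v k := by
    intro k _; ring
  rw [Finset.sum_congr rfl h3, Finset.sum_sub_distrib, ← Finset.sum_mul, Finset.sum_neg_distrib]
  ring

/-- The Laplacian quadratic form is nonnegative. -/
lemma lap_psd {n : ℕ} (M : Matrix (Fin n) (Fin n) ℝ) (hsymm : M.IsSymm)
    (hnonneg : ∀ i j, 0 ≤ M i j) (v : Fin n → ℝ) :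
    0 ≤ ∑ k, v k * (lap M *ᵥ v) k := by
  have hM : ∀ a b, M b a = M a b := fun a b => by
    have := congrFun (congrFun hsymm a) b; simpa [Matrix.transpose_apply] using this
  have hS : ∑ k, v k * (lap M *ᵥ v) k = ∑ a, ∑ b, M a b * v a * (v a - v b) := by
    refine Finset.sum_congr rfl fun a _ => ?_
    rw [lap_mulVec, Finset.mul_sum]
    exact Finset.sum_congr rfl fun b _ => by ring
  set S := ∑ k, v k * (lap M *ᵥ v) k with hSdef
  have hS' : S = ∑ a, ∑ b, M a b * v b * (v b - v a) := by
    rw [hS, Finset.sum_comm]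
    refine Finset.sum_congr rfl fun a _ => Finset.sum_congr rfl fun b _ => ?_
    rw [hM a b]
  have h2 : S + S = ∑ a, ∑ b, M a b * (v a - v b) ^ 2 := by
    nth_rewrite 1 [hS]
    rw [hS', ← Finset.sum_add_distrib]
    refine Finset.sum_congr rfl fun a _ => ?_
    rw [← Finset.sum_add_distrib]
    exact Finset.sum_congr rfl fun b _ => by ring
  have hpos : 0 ≤ ∑ a, ∑ b : Fin n, M a b * (v a - v b) ^ 2 :=
    Finset.sum_nonneg fun a _ => Finset.sum_nonneg fun b _ =>
      mul_nonneg (hnonneg a b) (sq_nonneg _)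
  linarith [h2 ▸ hpos]

/-- The ranking induced by the generalized row sum converges to the ranking from the
normalized scores as `ε → 0`: if `s i > s j`, then there exists `ε₀ > 0` such that
`x ε i > x ε j` for all `0 < ε < ε₀`. -/
theorem grs_ranking_tendsto_score_ranking
    (n : ℕ) (hn : 1 ≤ n) (M : Matrix (Fin n) (Fin n) ℝ)
    (hsymm : M.IsSymm) (hnonneg : ∀ i j, 0 ≤ M i j) (hdiag : ∀ i, M i i = 0)
    (s : Fin n → ℝ) (x : ℝ → (Fin n → ℝ))
    (hx : ∀ ε : ℝ, 0 < ε → (1 + ε • lap M) *ᵥ x ε = s)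
    (i j : Fin n) (hij : s i > s j) :
    ∃ ε₀ : ℝ, 0 < ε₀ ∧ ∀ ε : ℝ, 0 < ε → ε < ε₀ → x ε i > x ε j := by
  -- componentwise equation: x ε k + ε * (lap M *ᵥ x ε) k = s k
  have hcomp : ∀ ε : ℝ, 0 < ε → ∀ k, x ε k + ε * (lap M *ᵥ x ε) k = s k := by
    intro ε hε k
    have h := hx ε hε
    have := congrFun h k
    rw [Matrix.add_mulVec, Matrix.one_mulVec, Matrix.smul_mulVec] at this
    simpa using this
  set B2 : ℝ := ∑ k, s k ^ 2 with hB2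
  have hB2nn : 0 ≤ B2 := Finset.sum_nonneg fun k _ => sq_nonneg _
  set B : ℝ := Real.sqrt B2 with hB
  have hBnn : 0 ≤ B := Real.sqrt_nonneg _
  -- bound: |x ε k| ≤ B for all 0 < ε
  have hbound : ∀ ε : ℝ, 0 < ε → ∀ k, |x ε k| ≤ B := by
    intro ε hε k
    set v := x ε with hv
    have hA : ∑ k, v k ^ 2 ≤ ∑ k, v k * s k := by
      have : ∑ k, v k * s k = (∑ k, v k ^ 2) + ε * ∑ k, v k * (lap M *ᵥ v) k := by
        rw [Finset.mul_sum, ← Finset.sum_add_distrib]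
        refine Finset.sum_congr rfl fun k _ => ?_
        have hs : s k = v k + ε * (lap M *ᵥ v) k := by linarith [hcomp ε hε k]
        rw [hs]; ring
      have hpsd := lap_psd M hsymm hnonneg v
      nlinarith [mul_nonneg hε.le hpsd]
    have hCS := Finset.sum_mul_sq_le_sq_mul_sq Finset.univ v s
    have hAnn : 0 ≤ ∑ k, v k ^ 2 := Finset.sum_nonneg fun k _ => sq_nonneg _
    have hAB : ∑ k, v k ^ 2 ≤ B2 := by nlinarith
    have hk2 : v k ^ 2 ≤ B2 := le_trans
      (Finset.single_le_sum (fun k _ => sq_nonneg (v k)) (mem_univ k)) hAB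
    calc |v k| = Real.sqrt (v k ^ 2) := (Real.sqrt_sq_eq_abs _).symm
      _ ≤ B := Real.sqrt_le_sqrt hk2
  set C : ℝ := ∑ k, (|lap M i k| + |lap M j k|) with hC
  have hCnn : 0 ≤ C := Finset.sum_nonneg fun k _ => by positivity
  set D : ℝ := s i - s j with hD
  have hDpos : 0 < D := by simp [hD]; linarith
  refine ⟨D / (C * B + 1), div_pos hDpos (by positivity), fun ε hε hε₀ => ?_⟩
  -- bound on |(L x)_i - (L x)_j|
  have hL : ∀ a, |(lap M *ᵥ x ε) a| ≤ ∑ k, |lap M a k| * B := by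
    intro a
    have h1 : (lap M *ᵥ x ε) a = ∑ k, lap M a k * x ε k := rfl
    rw [h1]
    refine le_trans (Finset.abs_sum_le_sum_abs _ _) (Finset.sum_le_sum fun k _ => ?_)
    rw [abs_mul]
    exact mul_le_mul_of_nonneg_left (hbound ε hε k) (abs_nonneg _)
  have hLij : |(lap M *ᵥ x ε) i - (lap M *ᵥ x ε) j| ≤ C * B := by
    have := hL i
    have := hL j
    have hsum : (∑ k, |lap M i k| * B) + (∑ k, |lap M j k| * B) = C * B := by
      rw [hC, Finset.sum_mul, ← Finset.sum_add_distrib]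
      exact Finset.sum_congr rfl fun k _ => by ring
    calc |(lap M *ᵥ x ε) i - (lap M *ᵥ x ε) j|
        ≤ |(lap M *ᵥ x ε) i| + |(lap M *ᵥ x ε) j| := abs_sub _ _
      _ ≤ (∑ k, |lap M i k| * B) + (∑ k, |lap M j k| * B) := add_le_add (hL i) (hL j)
      _ = C * B := hsum
  have hi := hcomp ε hε i
  have hj := hcomp ε hε j
  have hεCB : ε * (C * B) < D := by
    have h1 : ε * (C * B + 1) < (D / (C * B + 1)) * (C * B + 1) :=
      mul_lt_mul_of_pos_right hε₀ (by positivity)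
    have h2 : (D / (C * B + 1)) * (C * B + 1) = D := by field_simp
    nlinarith [mul_nonneg hε.le (mul_nonneg hCnn hBnn)]
  have habs := abs_le.mp hLij
  have : x ε i - x ε j = D - ε * ((lap M *ᵥ x ε) i - (lap M *ᵥ x ε) j) := by
    rw [hD]; linarith
  nlinarith [habs.1, habs.2, mul_le_mul_of_nonneg_left habs.2 hε.le,
    mul_le_mul_of_nonneg_left habs.1 hε.le]
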